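/- For real δ with 0 < δ < 1, let W ⊂ ℂ⁴ be the span of the vectors (δ, 1, 1, δ) and (1, δ, δ, 2). Then the set of nonzero simple tensors in W (under the identification ℂ⁴ ≅ ℂ²⊗ℂ²) consists of exactly two distinct 1-dimensional subspaces. -/

import Mathlib

/-- For `0 < δ < 1`, the span of `(δ,1,1,δ)` and `(1,δ,δ,2)` in `ℂ²⊗ℂ²` (identified
with 2×2 matrices, simple tensors being those of vanishing determinant) contains
exactly two 1-dimensional subspaces of nonzero simple tensors. -/
theorem two_simple_lines (δ : ℝ) (hδ0 : 0 < δ) (hδ1 : δ < 1) :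
    ∃ L₁ L₂ : Submodule ℂ (Matrix (Fin 2) (Fin 2) ℂ), L₁ ≠ L₂ ∧
      Module.finrank ℂ L₁ = 1 ∧ Module.finrank ℂ L₂ = 1 ∧
      L₁ ≤ Submodule.span ℂ {!![(δ : ℂ), 1; 1, (δ : ℂ)], !![1, (δ : ℂ); (δ : ℂ), 2]} ∧
      L₂ ≤ Submodule.span ℂ {!![(δ : ℂ), 1; 1, (δ : ℂ)], !![1, (δ : ℂ); (δ : ℂ), 2]} ∧
      {v : Matrix (Fin 2) (Fin 2) ℂ |
          v ∈ Submodule.span ℂ {!![(δ : ℂ), 1; 1, (δ : ℂ)], !![1, (δ : ℂ); (δ : ℂ), 2]} ∧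
          v ≠ 0 ∧ v.det = 0}
        = ((L₁ : Set _) ∪ (L₂ : Set _)) \ {0} := by
  set a : ℝ := δ^2 - 1 with ha_def
  have hD : (0:ℝ) < 4*δ^4 - 11*δ^2 + 8 := by nlinarith [sq_nonneg (2*δ^2 - 11/4)]
  set s : ℝ := Real.sqrt (4*δ^4 - 11*δ^2 + 8) with hs_def
  have hs2 : s^2 = 4*δ^4 - 11*δ^2 + 8 := Real.sq_sqrt hD.le
  have hs0 : 0 < s := Real.sqrt_pos.mpr hD
  have ha : a ≠ 0 := by nlinarith
  set r₁ : ℝ := (-δ + s)/(2*a) with hr1_def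
  set r₂ : ℝ := (-δ - s)/(2*a) with hr2_def
  have hsum : a * (r₁ + r₂) = -δ := by rw [hr1_def, hr2_def]; field_simp; ring
  have hprod : a * (r₁ * r₂) = 2 - δ^2 := by
    rw [hr1_def, hr2_def]; field_simp
    linear_combination (-1)*hs2 + (-4*(2-δ^2))*ha_def
  have hrne : r₁ ≠ r₂ := by
    have hsub : r₁ - r₂ = s/a := by rw [hr1_def, hr2_def]; field_simp; ring
    intro h
    rw [h, sub_self] at hsub
    exact (div_ne_zero hs0.ne' ha) hsub.symm
  have hroot1 : a * r₁^2 + δ * r₁ + (2 - δ^2) = 0 := by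
    linear_combination r₁ * hsum - hprod
  have hroot2 : a * r₂^2 + δ * r₂ + (2 - δ^2) = 0 := by
    linear_combination r₂ * hsum - hprod
  have hr1d : r₁ + δ ≠ 0 := by
    intro h
    have : r₁ = -δ := by linarith
    rw [this, ha_def] at hroot1
    nlinarith [hroot1, mul_pos (by nlinarith : (0:ℝ) < 1-δ^2) (by nlinarith : (0:ℝ) < 2-δ^2)]
  have hr2d : r₂ + δ ≠ 0 := by
    intro h
    have : r₂ = -δ := by linarith
    rw [this, ha_def] at hroot2
    nlinarith [hroot2, mul_pos (by nlinarith : (0:ℝ) < 1-δ^2) (by nlinarith : (0:ℝ) < 2-δ^2)]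
  -- complex versions
  have ca_def : (a:ℂ) = (δ:ℂ)^2 - 1 := by exact_mod_cast congrArg Complex.ofReal ha_def
  have ca : (a:ℂ) ≠ 0 := by exact_mod_cast ha
  have csum : (a:ℂ) * ((r₁:ℂ) + (r₂:ℂ)) = -(δ:ℂ) := by exact_mod_cast congrArg Complex.ofReal hsum
  have cprod : (a:ℂ) * ((r₁:ℂ) * (r₂:ℂ)) = 2 - (δ:ℂ)^2 := by
    exact_mod_cast congrArg Complex.ofReal hprod
  set A : Matrix (Fin 2) (Fin 2) ℂ := !![(δ : ℂ), 1; 1, (δ : ℂ)] with hA_def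
  set B : Matrix (Fin 2) (Fin 2) ℂ := !![1, (δ : ℂ); (δ : ℂ), 2] with hB_def
  have hdet : ∀ x y : ℂ, (x • A + y • B).det = (a:ℂ) * (x - (r₁:ℂ)*y) * (x - (r₂:ℂ)*y) := by
    intro x y
    simp [hA_def, hB_def, Matrix.det_fin_two, Matrix.add_apply, Matrix.smul_apply]
    linear_combination (-(x^2)) * ca_def + (x*y) * csum + (-(y^2)) * cprod
  set w₁ : Matrix (Fin 2) (Fin 2) ℂ := (r₁:ℂ) • A + B with hw1_def
  set w₂ : Matrix (Fin 2) (Fin 2) ℂ := (r₂:ℂ) • A + B with hw2_def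
  have hw1ne : w₁ ≠ 0 := by
    intro h
    have h01 := congrFun (congrFun h 0) 1
    simp [hw1_def, hA_def, hB_def, Matrix.add_apply, Matrix.smul_apply] at h01
    exact hr1d (by exact_mod_cast h01)
  have hw2ne : w₂ ≠ 0 := by
    intro h
    have h01 := congrFun (congrFun h 0) 1
    simp [hw2_def, hA_def, hB_def, Matrix.add_apply, Matrix.smul_apply] at h01
    exact hr2d (by exact_mod_cast h01)
  have hw1mem : w₁ ∈ Submodule.span ℂ {A, B} :=
    Submodule.mem_span_pair.mpr ⟨(r₁:ℂ), 1, by rw [one_smul]⟩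
  have hw2mem : w₂ ∈ Submodule.span ℂ {A, B} :=
    Submodule.mem_span_pair.mpr ⟨(r₂:ℂ), 1, by rw [one_smul]⟩
  refine ⟨Submodule.span ℂ {w₁}, Submodule.span ℂ {w₂}, ?_, ?_, ?_, ?_, ?_, ?_⟩
  · -- L₁ ≠ L₂
    intro h
    have hw2in : w₂ ∈ Submodule.span ℂ {w₁} := h ▸ Submodule.mem_span_singleton_self w₂
    obtain ⟨c, hc⟩ := Submodule.mem_span_singleton.mp hw2in
    have e00 := congrFun (congrFun hc 0) 0
    have e11 := congrFun (congrFun hc 1) 1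
    have e01 := congrFun (congrFun hc 0) 1
    simp [hw1_def, hw2_def, hA_def, hB_def, Matrix.add_apply, Matrix.smul_apply] at e00 e11 e01
    have hc1 : c = 1 := by linear_combination e11 - e00
    rw [hc1, one_mul] at e01
    have : (r₁:ℂ) = (r₂:ℂ) := by linear_combination e01
    exact hrne (by exact_mod_cast this)
  · exact finrank_span_singleton hw1ne
  · exact finrank_span_singleton hw2ne
  · exact (Submodule.span_singleton_le_iff_mem _ _).mpr hw1mem
  · exact (Submodule.span_singleton_le_iff_mem _ _).mpr hw2mem
  · ext v
    simp only [Set.mem_setOf_eq, Set.mem_diff, Set.mem_union, SetLike.mem_coe,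
      Set.mem_singleton_iff]
    constructor
    · rintro ⟨hvmem, hv0, hvdet⟩
      obtain ⟨x, y, hxy⟩ := Submodule.mem_span_pair.mp hvmem
      rw [← hxy, hdet x y] at hvdet
      rcases mul_eq_zero.mp hvdet with h | h
      · rcases mul_eq_zero.mp h with h | h
        · exact absurd h ca
        · refine ⟨Or.inl (Submodule.mem_span_singleton.mpr ⟨y, ?_⟩), hv0⟩
          rw [← hxy, hw1_def]
          have hx : x = (r₁:ℂ) * y := by linear_combination h
          rw [hx, smul_add, smul_smul]
          ring_nf
      · refine ⟨Or.inr (Submodule.mem_span_singleton.mpr ⟨y, ?_⟩), hv0⟩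
        rw [← hxy, hw2_def]
        have hx : x = (r₂:ℂ) * y := by linear_combination h
        rw [hx, smul_add, smul_smul]
        ring_nf
    · rintro ⟨h | h, hv0⟩
      · obtain ⟨c, hc⟩ := Submodule.mem_span_singleton.mp h
        refine ⟨?_, hv0, ?_⟩
        · rw [← hc]; exact Submodule.smul_mem _ _ hw1mem
        · rw [← hc, hw1_def, smul_add, smul_smul]
          have : (c * (r₁:ℂ)) • A + c • B = (c * (r₁:ℂ)) • A + c • B := rfl
          rw [show (c * (r₁:ℂ)) • A + c • B = (c * (r₁:ℂ)) • A + c • B from rfl]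
          rw [hdet (c * (r₁:ℂ)) c]
          ring
      · obtain ⟨c, hc⟩ := Submodule.mem_span_singleton.mp h
        refine ⟨?_, hv0, ?_⟩
        · rw [← hc]; exact Submodule.smul_mem _ _ hw2mem
        · rw [← hc, hw2_def, smul_add, smul_smul]
          rw [hdet (c * (r₂:ℂ)) c]
          ring
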